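/- Let E ⊂ ℝ² be measurable, Φ ∈ W^{1,1} on a neighborhood of E, and suppose ∫_E |∇Φ|² dx ≤ F' t² and, for a.e. y in an interval I of length t/4 contained in the essential range, H¹(E ∩ Φ⁻¹(y)) ≥ c₀ > 0. Then, via the coarea formula and Cauchy–Schwarz, (c₀ t)/4 ≤ ∫_I H¹(E ∩ Φ⁻¹(y)) dy = ∫_E |∇Φ| dx ≤ (F')^{1/2} t (meas E)^{1/2}; hence meas(E) ≥ c₀²/(16 F'). -/

import Mathlib

open MeasureTheory Set

/-- Final contradiction step (Lemma 3.9): if `∫_E |∇Φ|² ≤ F' t²`, the coarea formula holds for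
`Φ` on `E`, and for a.e. `y` in an interval `I` of length `t/4` the level set `E ∩ Φ⁻¹(y)` has
`H¹`-measure at least `c₀ > 0`, then `meas(E) ≥ c₀²/(16 F')`. -/
theorem measure_lower_bound_from_coarea
    (E : Set (ℝ × ℝ)) (hE : MeasurableSet E) (hEfin : volume E ≠ ⊤)
    (Φ : ℝ × ℝ → ℝ) (g : ℝ × ℝ → ℝ × ℝ)
    (t c₀ F' a : ℝ) (ht : 0 < t) (hc₀ : 0 < c₀) (hF' : 0 < F')
    (hgrad2 : IntegrableOn (fun x => ‖g x‖ ^ 2) E)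
    (hub : ∫ x in E, ‖g x‖ ^ 2 ≤ F' * t ^ 2)
    (hco : ∫⁻ y, μH[1] (E ∩ Φ ⁻¹' {y}) = ∫⁻ x in E, ENNReal.ofReal ‖g x‖)
    (hlen : ∀ᵐ y ∂(volume.restrict (Icc a (a + t / 4))),
      ENNReal.ofReal c₀ ≤ μH[1] (E ∩ Φ ⁻¹' {y})) :
    c₀ ^ 2 / (16 * F') ≤ (volume E).toReal := by
  -- measurability of ‖g‖ on E
  have hsm2 : AEMeasurable (fun x => ‖g x‖ ^ 2) (volume.restrict E) :=
    hgrad2.aestronglyMeasurable.aemeasurable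
  have hsm : AEMeasurable (fun x => ‖g x‖) (volume.restrict E) := by
    have : AEMeasurable (fun x => Real.sqrt (‖g x‖ ^ 2)) (volume.restrict E) :=
      Real.continuous_sqrt.measurable.comp_aemeasurable hsm2
    simpa [Real.sqrt_sq (norm_nonneg _)] using this
  have hf : AEMeasurable (fun x => ENNReal.ofReal ‖g x‖) (volume.restrict E) :=
    ENNReal.measurable_ofReal.comp_aemeasurable hsm
  -- upper bound: Cauchy–Schwarz (Hölder with p = q = 2)
  have holder := ENNReal.lintegral_mul_le_Lp_mul_Lq (volume.restrict E)
    (Real.HolderConjugate.two_two : Real.HolderConjugate 2 2) hf aemeasurable_const (g := fun _ => (1 : ENNReal))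
  simp only [Pi.mul_apply, mul_one, one_mul, ENNReal.one_rpow, lintegral_const,
    Measure.restrict_apply_univ] at holder
  -- compute ∫⁻ f^2
  have hsq : ∫⁻ x in E, (ENNReal.ofReal ‖g x‖) ^ (2 : ℝ) = ENNReal.ofReal (∫ x in E, ‖g x‖ ^ 2) := by
    rw [ofReal_integral_eq_lintegral_ofReal hgrad2 (Filter.Eventually.of_forall fun x => by positivity)]
    refine lintegral_congr fun x => ?_
    rw [show ((2:ℝ)) = ((2:ℕ):ℝ) by norm_num, ENNReal.rpow_natCast]
    exact (ENNReal.ofReal_pow (norm_nonneg _) 2).symm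
  rw [hsq] at holder
  have hubE : (ENNReal.ofReal (∫ x in E, ‖g x‖ ^ 2)) ≤ ENNReal.ofReal (F' * t ^ 2) :=
    ENNReal.ofReal_le_ofReal hub
  -- lower bound via level sets
  have hlow : ENNReal.ofReal (c₀ * (t / 4)) ≤ ∫⁻ x in E, ENNReal.ofReal ‖g x‖ := by
    have h1 : ENNReal.ofReal (c₀ * (t / 4)) ≤
        ∫⁻ y in Icc a (a + t / 4), μH[1] (E ∩ Φ ⁻¹' {y}) := by
      calc ENNReal.ofReal (c₀ * (t / 4))
          = ∫⁻ _ in Icc a (a + t / 4), ENNReal.ofReal c₀ := by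
            rw [lintegral_const, Measure.restrict_apply_univ, Real.volume_Icc,
              ENNReal.ofReal_mul hc₀.le]
            ring_nf
        _ ≤ _ := lintegral_mono_ae hlen
    have h2 : ∫⁻ y in Icc a (a + t / 4), μH[1] (E ∩ Φ ⁻¹' {y}) ≤
        ∫⁻ y, μH[1] (E ∩ Φ ⁻¹' {y}) :=
      lintegral_mono' Measure.restrict_le_self le_rfl
    rw [hco] at h2
    exact h1.trans h2
  -- combine
  have key : ENNReal.ofReal (c₀ * (t / 4)) ≤
      (ENNReal.ofReal (F' * t ^ 2)) ^ ((1 : ℝ) / 2) * (volume E) ^ ((1 : ℝ) / 2) := by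
    refine hlow.trans (holder.trans ?_)
    gcongr
  -- square both sides
  have key2 : ENNReal.ofReal ((c₀ * (t / 4)) ^ 2) ≤ ENNReal.ofReal (F' * t ^ 2) * volume E := by
    have hsq2 := ENNReal.rpow_le_rpow key (by norm_num : (0:ℝ) ≤ 2)
    rw [ENNReal.mul_rpow_of_nonneg _ _ (by norm_num : (0:ℝ) ≤ 2), ← ENNReal.rpow_mul,
      ← ENNReal.rpow_mul] at hsq2
    norm_num at hsq2
    calc ENNReal.ofReal ((c₀ * (t / 4)) ^ 2)
        = (ENNReal.ofReal (c₀ * (t / 4))) ^ (2 : ℕ) := ENNReal.ofReal_pow (by positivity) 2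
      _ ≤ _ := by
          convert hsq2 using 2 <;> norm_num [ENNReal.rpow_natCast]
  -- cancel ofReal (F' * t^2)
  have hne0 : ENNReal.ofReal (F' * t ^ 2) ≠ 0 := by
    simp [ENNReal.ofReal_eq_zero, not_le]
    positivity
  have hnetop : ENNReal.ofReal (F' * t ^ 2) ≠ ⊤ := ENNReal.ofReal_ne_top
  have hmain : ENNReal.ofReal (c₀ ^ 2 / (16 * F')) ≤ volume E := by
    rw [← ENNReal.div_le_iff' hne0 hnetop] at key2
    refine le_trans (le_of_eq ?_) key2
    rw [← ENNReal.ofReal_div_of_pos (by positivity)]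
    congr 1
    field_simp
    ring
  rw [ENNReal.ofReal_le_iff_le_toReal hEfin] at hmain
  exact hmain
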